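/- For any topological space X, the network weight is at most the weight: nw(X) ≤ w(X), and if X is compact Hausdorff then nw(X) = w(X) when these are infinite (in particular a compact Hausdorff space with a countable network is second countable, i.e. metrizable). -/

import Mathlib

open Cardinal

/-- A network for a topological space. -/
def IsNetwork {Y : Type*} [TopologicalSpace Y] (N : Set (Set Y)) : Prop :=
  ∀ y : Y, ∀ U : Set Y, IsOpen U → y ∈ U → ∃ M ∈ N, y ∈ M ∧ M ⊆ U

/-- The network weight: the minimal infinite cardinality of a network. -/
noncomputable def netWeight (Y : Type u) [TopologicalSpace Y] : Cardinal.{u} :=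
  sInf {c | ∃ N : Set (Set Y), IsNetwork N ∧ max #N ℵ₀ = c}

/-- The weight: the minimal infinite cardinality of a base. -/
noncomputable def weight' (Y : Type u) [TopologicalSpace Y] : Cardinal.{u} :=
  sInf {c | ∃ B : Set (Set Y), TopologicalSpace.IsTopologicalBasis B ∧ max #B ℵ₀ = c}

lemma mk_finset_le' (α : Type u) : #(Finset α) ≤ max #α ℵ₀ := by
  cases finite_or_infinite α
  · exact le_trans mk_le_aleph0 (le_max_right _ _)
  · rw [mk_finset_of_infinite]
    exact le_max_left _ _

lemma basis_isNetwork {Y : Type*} [TopologicalSpace Y] {B : Set (Set Y)}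
    (hB : TopologicalSpace.IsTopologicalBasis B) : IsNetwork B := by
  intro y U hU hyU
  obtain ⟨M, hM, hyM, hMU⟩ := hB.exists_subset_of_mem_open hyU hU
  exact ⟨M, hM, hyM, hMU⟩

set_option maxHeartbeats 1000000 in
lemma main_lemma {X : Type u} [TopologicalSpace X] [CompactSpace X] [T2Space X]
    {N : Set (Set X)} (hN : IsNetwork N) :
    ∃ B : Set (Set X), TopologicalSpace.IsTopologicalBasis B ∧ max #B ℵ₀ ≤ max #N ℵ₀ := by
  classical
  set P : Set (Set X × Set X) :=
    {p | p.1 ∈ N ∧ p.2 ∈ N ∧ ∃ U V : Set X, IsOpen U ∧ IsOpen V ∧ p.1 ⊆ U ∧ p.2 ⊆ V ∧ Disjoint U V}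
    with hPdef
  choose u v huo hvo h1U h2V hdisj using fun p : P => p.2.2.2
  refine ⟨Set.range (fun s : Finset P => ⋂ p ∈ s, u p), ?_, ?_⟩
  · apply TopologicalSpace.isTopologicalBasis_of_isOpen_of_nhds
    · rintro b ⟨s, rfl⟩
      exact isOpen_biInter_finset (fun p _ => huo p)
    · intro x W hxW hW
      have hK : IsCompact (Wᶜ) := hW.isClosed_compl.isCompact
      have hcov : Wᶜ ⊆ ⋃ p : {p : P // x ∈ (p : Set X × Set X).1}, v p.1 := by
        intro y hy
        have hne : x ≠ y := fun h => hy (h ▸ hxW)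
        obtain ⟨Uy, Vy, hUo, hVo, hxU, hyV, hUV⟩ := t2_separation hne
        obtain ⟨M1, hM1N, hxM1, hM1U⟩ := hN x Uy hUo hxU
        obtain ⟨M2, hM2N, hyM2, hM2V⟩ := hN y Vy hVo hyV
        have hP : (M1, M2) ∈ P := ⟨hM1N, hM2N, Uy, Vy, hUo, hVo, hM1U, hM2V, hUV⟩
        exact Set.mem_iUnion.2 ⟨⟨⟨(M1, M2), hP⟩, hxM1⟩, h2V ⟨(M1, M2), hP⟩ hyM2⟩
      obtain ⟨t, ht⟩ := hK.elim_finite_subcover (fun p : {p : P // x ∈ (p : Set X × Set X).1} => v p.1) (fun p => hvo p.1) hcov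
      refine ⟨_, ⟨t.image (fun p => p.1), rfl⟩, ?_, ?_⟩
      · refine Set.mem_biInter ?_
        intro p hp
        obtain ⟨q, hq, rfl⟩ := Finset.mem_image.1 hp
        exact h1U q.1 q.2
      · intro z hz
        by_contra hzW
        obtain ⟨q, hqt, hzv⟩ := Set.mem_iUnion₂.1 (ht hzW)
        have hzu : z ∈ u q.1 := by
          have hmem : q.1 ∈ t.image (fun p => p.1) := Finset.mem_image_of_mem _ hqt
          exact Set.mem_iInter₂.1 hz q.1 hmem
        exact (hdisj q.1).le_bot ⟨hzu, hzv⟩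
  · have hPN : #P ≤ max #N ℵ₀ := by
      have hinj : Function.Injective
          (fun p : P => ((⟨p.1.1, p.2.1⟩ : N), (⟨p.1.2, p.2.2.1⟩ : N))) := by
        intro p q h
        apply Subtype.ext
        have h1 : (p : Set X × Set X).1 = (q : Set X × Set X).1 :=
          congrArg (fun x => (x.1 : Set X)) h
        have h2 : (p : Set X × Set X).2 = (q : Set X × Set X).2 :=
          congrArg (fun x => (x.2 : Set X)) h
        exact Prod.ext h1 h2
      calc #P ≤ #(N × N) := mk_le_of_injective hinj
        _ = #N * #N := by simp [mk_prod]
        _ ≤ max #N ℵ₀ * max #N ℵ₀ := mul_le_mul' (le_max_left _ _) (le_max_left _ _)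
        _ = max #N ℵ₀ := mul_eq_self (le_max_right _ _)
    refine max_le ?_ (le_max_right _ _)
    calc #(Set.range fun s : Finset P => ⋂ p ∈ s, u p) ≤ #(Finset P) := mk_range_le
      _ ≤ max #P ℵ₀ := mk_finset_le' _
      _ ≤ max (max #N ℵ₀) ℵ₀ := max_le_max hPN le_rfl
      _ = max #N ℵ₀ := by rw [max_assoc, max_self]

/-- `nw(X) ≤ w(X)` always, and `nw(X) = w(X)` for compact Hausdorff `X`. -/
theorem stmt_15 {X : Type u} [TopologicalSpace X] :
    netWeight X ≤ weight' X ∧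
      (CompactSpace X → T2Space X → netWeight X = weight' X) := by
  have hWne : {c | ∃ B : Set (Set X), TopologicalSpace.IsTopologicalBasis B
      ∧ max #B ℵ₀ = c}.Nonempty :=
    ⟨_, _, TopologicalSpace.isTopologicalBasis_opens, rfl⟩
  have hNne : {c | ∃ N : Set (Set X), IsNetwork N ∧ max #N ℵ₀ = c}.Nonempty :=
    ⟨_, Set.univ, fun y U hU hyU => ⟨U, Set.mem_univ _, hyU, subset_rfl⟩, rfl⟩
  have hle : netWeight X ≤ weight' X := by
    apply csInf_le_csInf (OrderBot.bddBelow _) hWne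
    rintro c ⟨B, hB, rfl⟩
    exact ⟨B, basis_isNetwork hB, rfl⟩
  refine ⟨hle, fun hC hT => ?_⟩
  refine le_antisymm hle ?_
  obtain ⟨Nn, hNn, hEq⟩ := csInf_mem hNne
  obtain ⟨B, hB, hBle⟩ := main_lemma hNn
  calc weight' X ≤ max #B ℵ₀ := csInf_le (OrderBot.bddBelow _) ⟨B, hB, rfl⟩
    _ ≤ max #Nn ℵ₀ := hBle
    _ = netWeight X := hEq
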